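/- Let σ > 0 and c > 0 with c ≠ 1. Set k = (c² − 1)/(√σ·c), v = σc/(1 + c)², and θ(y,s) = k(y − v·s). Then for all (y,s) ∈ ℝ²: (i) −∂ₛ²( log(1 + e^{θ(y,s)}) ) = −(σ/4)·((1 − c)/(1 + c))² · sech²(θ(y,s)/2), and (ii) (1 + e^{θ(y,s)})² / ( (1 + c·e^{θ(y,s)})(1 + c⁻¹·e^{θ(y,s)}) ) = ( 1 + ((1 − c)²/(4c))·sech²(θ(y,s)/2) )⁻¹. (These are the explicit one-soliton profiles u and ρ of the two-component Hunter–Saxton equation in hodograph coordinates; note k(y − vs) = ky + ωs with ω = √σ(1−c)/(1+c).) -/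

import Mathlib

/-- The hyperbolic secant, sech x = 2/(eˣ + e⁻ˣ) = 1/cosh x. -/
noncomputable def sech (x : ℝ) : ℝ := 1 / Real.cosh x

private lemma hda (b a s : ℝ) :
    HasDerivAt (fun t : ℝ => Real.exp (b + a * t)) (Real.exp (b + a * s) * a) s := by
  have h1 : HasDerivAt (fun t : ℝ => b + a * t) a s := by
    simpa using ((hasDerivAt_id s).const_mul a).const_add b
  exact (Real.hasDerivAt_exp (b + a * s)).comp s h1

private lemma deriv1 (b a : ℝ) :
    deriv (fun t => Real.log (1 + Real.exp (b + a * t))) =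
      fun t => a * Real.exp (b + a * t) / (1 + Real.exp (b + a * t)) := by
  funext s
  have h4 : (0:ℝ) < 1 + Real.exp (b + a * s) := by positivity
  have h5 := (((hda b a s).const_add 1).log h4.ne')
  rw [h5.deriv]; ring

private lemma deriv2 (b a : ℝ) :
    deriv (fun t => a * Real.exp (b + a * t) / (1 + Real.exp (b + a * t))) =
      fun t => a ^ 2 * Real.exp (b + a * t) / (1 + Real.exp (b + a * t)) ^ 2 := by
  funext s
  have h4 : (0:ℝ) < 1 + Real.exp (b + a * s) := by positivity
  have hN := (hda b a s).const_mul a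
  have hD := (hda b a s).const_add 1
  have h : HasDerivAt (fun t => a * Real.exp (b + a * t) / (1 + Real.exp (b + a * t))) _ s :=
    (hN.div hD h4.ne')
  rw [h.deriv]
  set E := Real.exp (b + a * s)
  field_simp
  ring

private lemma sech_sq (x : ℝ) :
    sech (x / 2) ^ 2 = 4 * Real.exp x / (1 + Real.exp x) ^ 2 := by
  have hp : (0:ℝ) < Real.exp (x / 2) := Real.exp_pos _
  have h2 : Real.exp (x / 2) * Real.exp (x / 2) = Real.exp x := by
    rw [← Real.exp_add]; ring_nf
  have h4 : (0:ℝ) < 1 + Real.exp x := by positivity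
  have hch : Real.cosh (x / 2) = (Real.exp (x / 2) + (Real.exp (x / 2))⁻¹) / 2 := by
    rw [Real.cosh_eq, Real.exp_neg]
  rw [sech, hch]
  rw [← h2]
  field_simp
  ring

theorem one_soliton_profile (σ c : ℝ) (hσ : 0 < σ) (hc : 0 < c) (hc1 : c ≠ 1)
    (k v : ℝ)
    (hk : k = (c ^ 2 - 1) / (Real.sqrt σ * c))
    (hv : v = σ * c / (1 + c) ^ 2)
    (θ : ℝ → ℝ → ℝ) (hθ : θ = fun y s => k * (y - v * s)) :
    ∀ y s : ℝ,
      (-(deriv (deriv (fun s' => Real.log (1 + Real.exp (θ y s')))) s)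
        = -(σ / 4) * ((1 - c) / (1 + c)) ^ 2 * (sech (θ y s / 2)) ^ 2) ∧
      ((1 + Real.exp (θ y s)) ^ 2 /
          ((1 + c * Real.exp (θ y s)) * (1 + c⁻¹ * Real.exp (θ y s)))
        = (1 + (1 - c) ^ 2 / (4 * c) * (sech (θ y s / 2)) ^ 2)⁻¹) := by
  intro y s
  have hc0 : c ≠ 0 := hc.ne'
  have hc1p : (0:ℝ) < 1 + c := by linarith
  have hsq : Real.sqrt σ ^ 2 = σ := Real.sq_sqrt hσ.le
  have hsne : Real.sqrt σ ≠ 0 := (Real.sqrt_pos.mpr hσ).ne'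
  set b := k * y with hb
  set a := -(k * v) with ha
  have harg : ∀ t, θ y t = b + a * t := by intro t; rw [hθ]; ring
  have hE : (0:ℝ) < Real.exp (θ y s) := Real.exp_pos _
  have hkey : a ^ 2 = σ * ((1 - c) / (1 + c)) ^ 2 := by
    rw [ha, hk, hv, ← hsq]
    field_simp
    ring_nf
    rw [hsq, hsq]
  constructor
  · have hfun : (fun s' => Real.log (1 + Real.exp (θ y s'))) =
        fun s' => Real.log (1 + Real.exp (b + a * s')) := by
      funext t; rw [harg]
    rw [hfun, deriv1, deriv2]
    simp only [← harg, sech_sq, hkey]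
    have h4 : (0:ℝ) < 1 + Real.exp (θ y s) := by positivity
    field_simp
  · rw [sech_sq]
    set E := Real.exp (θ y s)
    have h1 : (0:ℝ) < 1 + c * E := by positivity
    have h2 : (0:ℝ) < 1 + c⁻¹ * E := by positivity
    have h4 : (0:ℝ) < 1 + E := by positivity
    have h5 : (0:ℝ) < 1 + (1 - c) ^ 2 / (4 * c) * (4 * E / (1 + E) ^ 2) := by positivity
    rw [eq_comm, inv_eq_iff_eq_inv, eq_comm, inv_div]
    field_simp
    ring
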